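/- Let h be the 5-dimensional real Lie algebra with nonzero brackets [X_1,X_2] = X_2, [X_1,X_3] = -X_3, [X_1,X_4] = -2X_4, [X_2,X_3] = -X_5, and θ^1,...,θ^5 the dual basis. Then H^2_{-3θ^1}(h) is one-dimensional, spanned by the class of θ^3∧θ^4. -/

import Mathlib

open scoped BigOperators

/-- The space of real-valued `k`-cochains on `L` (as bare functions). -/
abbrev Cochain (L : Type*) (k : ℕ) := (Fin k → L) → ℝ

variable {L : Type*} [LieRing L] [LieAlgebra ℝ L]

/-- A cochain is an alternating multilinear map, i.e. an element of `Hom(Λ^k g, ℝ)`. -/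
def IsAltMap {k : ℕ} (θ : Cochain L k) : Prop :=
  ∃ f : AlternatingMap ℝ L ℝ (Fin k), ⇑f = θ

/-- The Chevalley–Eilenberg differential with trivial coefficients:
`(dθ)(X_0,…,X_k) = ∑_{p<q} (-1)^{p+q} θ([X_p,X_q],X_0,…,X̂_p,…,X̂_q,…,X_k)`. -/
def CEd : {k : ℕ} → Cochain L k → Cochain L (k + 1)
  | 0, _ => fun _ => 0
  | (k + 1), θ => fun X =>
      ∑ p : Fin (k + 2), ∑ q : Fin (k + 2),
        if h : (p : ℕ) < (q : ℕ) then
          ((-1 : ℝ) ^ ((p : ℕ) + (q : ℕ))) *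
            θ (Fin.cons ⁅X p, X q⁆
                (Fin.removeNth ⟨(p : ℕ), lt_of_lt_of_le h (Nat.lt_succ_iff.mp q.isLt)⟩
                  (Fin.removeNth q X)))
        else 0

/-- The wedge product `ω ∧ θ` of a 1-cochain with a `k`-cochain. -/
def oneWedge {k : ℕ} (ω : L → ℝ) (θ : Cochain L k) : Cochain L (k + 1) :=
  fun X => ∑ i : Fin (k + 1), ((-1 : ℝ) ^ (i : ℕ)) * ω (X i) * θ (Fin.removeNth i X)

/-- The deformed differential `d_{λω} θ = dθ + λ ω ∧ θ`. -/
def dDef {k : ℕ} (lam : ℝ) (ω : L → ℝ) (θ : Cochain L k) : Cochain L (k + 1) :=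
  CEd θ + lam • oneWedge ω θ

/-- The submodule of alternating multilinear `k`-cochains, i.e. `C^k(g,ℝ) = Hom(Λ^k g, ℝ)`. -/
def AltSub (L : Type*) [LieRing L] [LieAlgebra ℝ L] (k : ℕ) : Submodule ℝ (Cochain L k) where
  carrier := {θ | IsAltMap θ}
  add_mem' := by rintro θ₁ θ₂ ⟨f, rfl⟩ ⟨g, rfl⟩; exact ⟨f + g, rfl⟩
  zero_mem' := ⟨0, rfl⟩
  smul_mem' := by rintro c θ ⟨f, rfl⟩; exact ⟨c • f, rfl⟩

/-- The Chevalley–Eilenberg differential as a linear map. -/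
def CEdL (L : Type*) [LieRing L] [LieAlgebra ℝ L] (k : ℕ) :
    Cochain L k →ₗ[ℝ] Cochain L (k + 1) where
  toFun := CEd
  map_add' θ₁ θ₂ := by
    cases k with
    | zero => funext X; exact (zero_add (0:ℝ)).symm
    | succ k =>
      funext X
      show _ = CEd θ₁ X + CEd θ₂ X
      simp only [CEd, Pi.add_apply]
      rw [← Finset.sum_add_distrib]
      refine Finset.sum_congr rfl fun p _ => ?_
      rw [← Finset.sum_add_distrib]
      refine Finset.sum_congr rfl fun q _ => ?_
      split_ifs <;> simp [mul_add]
  map_smul' c θ := by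
    cases k with
    | zero => funext X; exact (smul_zero c).symm
    | succ k =>
      funext X
      show _ = c * CEd θ X
      simp only [CEd, Pi.smul_apply, smul_eq_mul]
      rw [Finset.mul_sum]
      refine Finset.sum_congr rfl fun p _ => ?_
      rw [Finset.mul_sum]
      refine Finset.sum_congr rfl fun q _ => ?_
      split_ifs with h
      · ring
      · exact (mul_zero c).symm

/-- The operator `θ ↦ ω ∧ θ` as a linear map. -/
def oneWedgeL (L : Type*) [LieRing L] [LieAlgebra ℝ L] (ω : L → ℝ) (k : ℕ) :
    Cochain L k →ₗ[ℝ] Cochain L (k + 1) where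
  toFun := oneWedge ω
  map_add' θ₁ θ₂ := by
    funext X
    simp [oneWedge, mul_add, Finset.sum_add_distrib]
  map_smul' c θ := by
    funext X
    simp only [oneWedge, Pi.smul_apply, smul_eq_mul, RingHom.id_apply]
    rw [Finset.mul_sum]
    exact Finset.sum_congr rfl fun i _ => by ring

/-- The deformed differential `d_{λω}` as a linear map. -/
noncomputable def dDefL (L : Type*) [LieRing L] [LieAlgebra ℝ L]
    (lam : ℝ) (ω : L → ℝ) (k : ℕ) : Cochain L k →ₗ[ℝ] Cochain L (k + 1) :=
  CEdL L k + lam • oneWedgeL L ω k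

/-- Deformed `k`-cocycles: alternating cochains with `d_{λω} θ = 0`. -/
noncomputable def Zdef (L : Type*) [LieRing L] [LieAlgebra ℝ L]
    (lam : ℝ) (ω : L → ℝ) (k : ℕ) : Submodule ℝ (Cochain L k) :=
  AltSub L k ⊓ LinearMap.ker (dDefL L lam ω k)

/-- Deformed `(k+1)`-coboundaries: images under `d_{λω}` of alternating `k`-cochains. -/
noncomputable def Bdef (L : Type*) [LieRing L] [LieAlgebra ℝ L]
    (lam : ℝ) (ω : L → ℝ) (k : ℕ) : Submodule ℝ (Cochain L (k + 1)) :=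
  Submodule.map (dDefL L lam ω k) (AltSub L k)

/-- The deformed cohomology `H^{k+1}_{λω}(g)` = closed forms modulo exact forms. -/
noncomputable abbrev Hdef (L : Type*) [LieRing L] [LieAlgebra ℝ L]
    (lam : ℝ) (ω : L → ℝ) (k : ℕ) :=
  Zdef L lam ω (k + 1) ⧸
    Submodule.comap (Zdef L lam ω (k + 1)).subtype (Bdef L lam ω k)

/-- The 1-cochain associated to a linear functional. -/
def c1 {L : Type*} (f : L → ℝ) : Cochain L 1 := fun X => f (X 0)

/-- The wedge product `f ∧ g` of two 1-forms, as a 2-cochain. -/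
def w2 {L : Type*} (f g : L → ℝ) : Cochain L 2 :=
  fun X => f (X 0) * g (X 1) - f (X 1) * g (X 0)


set_option linter.unusedSectionVars false
/-! ### Auxiliary lemmas -/

section Aux

variable {M : Type*} [LieRing M] [LieAlgebra ℝ M]

private lemma finfun2_eq (X : Fin 2 → M) : X = ![X 0, X 1] := by
  funext i; fin_cases i <;> rfl

private lemma cons3_01 (X : Fin 3 → M) :
    Fin.cons ⁅X 0, X 1⁆ (Fin.tail (Fin.removeNth 1 X)) = ![⁅X 0, X 1⁆, X 2] := by
  funext i
  fin_cases i
  · rfl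
  · show Fin.cons _ _ (Fin.succ 0) = _
    rw [Fin.cons_succ]; simp [Fin.removeNth, Fin.succAbove, Fin.tail]

private lemma cons3_02 (X : Fin 3 → M) :
    Fin.cons ⁅X 0, X 2⁆ (Fin.tail (Fin.removeNth 2 X)) = ![⁅X 0, X 2⁆, X 1] := by
  funext i
  fin_cases i
  · rfl
  · show Fin.cons _ _ (Fin.succ 0) = _
    rw [Fin.cons_succ]; simp [Fin.removeNth, Fin.succAbove, Fin.tail]

private lemma cons3_12 (X : Fin 3 → M) :
    Fin.cons ⁅X 1, X 2⁆ (Fin.removeNth 1 (Fin.removeNth 2 X)) = ![⁅X 1, X 2⁆, X 0] := by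
  funext i
  fin_cases i
  · rfl
  · show Fin.cons _ _ (Fin.succ 0) = _
    rw [Fin.cons_succ]; simp [Fin.removeNth, Fin.succAbove, Fin.tail]

private lemma tail3 (X : Fin 3 → M) : Fin.tail X = ![X 1, X 2] := by
  funext i; fin_cases i <;> simp [Fin.tail]

private lemma rm3_1 (X : Fin 3 → M) : Fin.removeNth 1 X = ![X 0, X 2] := by
  funext i; fin_cases i <;> simp [Fin.removeNth, Fin.succAbove]

private lemma rm3_2 (X : Fin 3 → M) : Fin.removeNth 2 X = ![X 0, X 1] := by
  funext i; fin_cases i <;> simp [Fin.removeNth, Fin.succAbove]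

lemma CEd1_apply (θ : Cochain M 1) (X : Fin 2 → M) :
    CEd θ X = - θ (fun _ => ⁅X 0, X 1⁆) := by
  show (∑ p : Fin 2, ∑ q : Fin 2, _) = _
  rw [Fin.sum_univ_two, Fin.sum_univ_two, Fin.sum_univ_two]
  norm_num
  congr 1
  funext i
  fin_cases i
  simp [Fin.cons]

lemma oneWedge1_apply (ω : M → ℝ) (θ : Cochain M 1) (X : Fin 2 → M) :
    oneWedge ω θ X = ω (X 0) * θ (fun _ => X 1) - ω (X 1) * θ (fun _ => X 0) := by
  have h1 : Fin.tail X = fun _ : Fin 1 => X 1 := by funext i; fin_cases i; rfl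
  have h2 : Fin.removeNth 1 X = fun _ : Fin 1 => X 0 := by
    funext i; fin_cases i; simp [Fin.removeNth, Fin.succAbove]
  rw [oneWedge, Fin.sum_univ_two]
  show _ * _ * θ (Fin.tail X) + _ = _
  rw [h1, h2]
  norm_num
  ring

lemma CEd2_apply (θ : Cochain M 2) (X : Fin 3 → M) :
    CEd θ X = - θ ![⁅X 0, X 1⁆, X 2] + θ ![⁅X 0, X 2⁆, X 1] - θ ![⁅X 1, X 2⁆, X 0] := by
  show (∑ p : Fin 3, ∑ q : Fin 3, _) = _
  simp only [Fin.sum_univ_three]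
  norm_num
  rw [cons3_01, cons3_02, cons3_12]
  ring

lemma oneWedge2_apply (ω : M → ℝ) (θ : Cochain M 2) (X : Fin 3 → M) :
    oneWedge ω θ X = ω (X 0) * θ ![X 1, X 2] - ω (X 1) * θ ![X 0, X 2]
      + ω (X 2) * θ ![X 0, X 1] := by
  rw [oneWedge, Fin.sum_univ_three]
  show _ * _ * θ (Fin.tail X) + _ + _ = _
  rw [tail3, rm3_1, rm3_2]
  norm_num
  ring

lemma dDefL_apply_fun (lam : ℝ) (ω : M → ℝ) (k : ℕ) (θ : Cochain M k) (X : Fin (k+1) → M) :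
    dDefL M lam ω k θ X = CEd θ X + lam * oneWedge ω θ X := rfl

end Aux

section Alt
set_option linter.unusedSectionVars false
variable {M : Type*} [LieRing M] [LieAlgebra ℝ M]

/-- `w2` of two linear functionals is alternating. -/
lemma isAlt_w2 (f g : M →ₗ[ℝ] ℝ) : IsAltMap (w2 (⇑f) (⇑g)) := by
  refine ⟨(Matrix.detRowAlternating).compLinearMap (LinearMap.pi ![f, g]), ?_⟩
  funext X
  show Matrix.det (Matrix.of fun i => (LinearMap.pi ![f, g]) (X i)) = _
  rw [Matrix.det_fin_two]
  simp [w2, LinearMap.pi_apply]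
  ring

/-- `c1` of a linear functional is alternating. -/
lemma isAlt_c1 (f : M →ₗ[ℝ] ℝ) : IsAltMap (c1 (⇑f)) := by
  refine ⟨AlternatingMap.ofSubsingleton ℝ M ℝ 0 f, ?_⟩
  funext X
  rfl

private lemma upd0 (a b c : M) : Function.update ![a, b] (0 : Fin 2) c = ![c, b] := by
  funext i; fin_cases i <;> simp
private lemma upd1 (a b c : M) : Function.update ![a, b] (1 : Fin 2) c = ![a, c] := by
  funext i; fin_cases i <;> simp

/-- The bilinear map associated to an alternating 2-form. -/
noncomputable def altBil (f : AlternatingMap ℝ M ℝ (Fin 2)) : M →ₗ[ℝ] M →ₗ[ℝ] ℝ :=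
  LinearMap.mk₂ ℝ (fun x y => f ![x, y])
    (fun x x' y => by
      show f ![x + x', y] = f ![x, y] + f ![x', y]
      rw [← upd0 x y (x + x'), f.map_update_add, upd0, upd0])
    (fun c x y => by
      show f ![c • x, y] = c • f ![x, y]
      rw [← upd0 x y (c • x), f.map_update_smul, upd0])
    (fun x y y' => by
      show f ![x, y + y'] = f ![x, y] + f ![x, y']
      rw [← upd1 x y (y + y'), f.map_update_add, upd1, upd1])
    (fun c x y => by
      show f ![x, c • y] = c • f ![x, y]
      rw [← upd1 x y (c • y), f.map_update_smul, upd1])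

/-- The bilinear map associated to `w2 f g`. -/
noncomputable def wBil (f g : M →ₗ[ℝ] ℝ) : M →ₗ[ℝ] M →ₗ[ℝ] ℝ :=
  LinearMap.mk₂ ℝ (fun x y => f x * g y - f y * g x)
    (fun x x' y => by simp; ring)
    (fun c x y => by simp; ring)
    (fun x y y' => by simp; ring)
    (fun c x y => by simp; ring)

end Alt

section Decomp
set_option linter.unusedSectionVars false
set_option maxHeartbeats 1000000
variable {M : Type*} [LieRing M] [LieAlgebra ℝ M] (E : Module.Basis (Fin 5) ℝ M)

/-- basis wedge 2-cochains -/
noncomputable def ww (i j : Fin 5) : Cochain M 2 :=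
  w2 (fun v => E.repr v i) (fun v => E.repr v j)

lemma coord_eq (i : Fin 5) : (fun v : M => E.repr v i) = ⇑(E.coord i) := by
  funext v; simp [Module.Basis.coord_apply]

lemma ww_mem (i j : Fin 5) : ww E i j ∈ AltSub M 2 := by
  have : ww E i j = w2 (⇑(E.coord i)) (⇑(E.coord j)) := by rw [ww, coord_eq, coord_eq]
  rw [this]; exact isAlt_w2 _ _

lemma alt2_decomp (θ : Cochain M 2) (h : IsAltMap θ) :
    θ = θ ![E 0, E 1] • ww E 0 1 + θ ![E 0, E 2] • ww E 0 2 + θ ![E 0, E 3] • ww E 0 3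
      + θ ![E 0, E 4] • ww E 0 4 + θ ![E 1, E 2] • ww E 1 2 + θ ![E 1, E 3] • ww E 1 3
      + θ ![E 1, E 4] • ww E 1 4 + θ ![E 2, E 3] • ww E 2 3 + θ ![E 2, E 4] • ww E 2 4
      + θ ![E 3, E 4] • ww E 3 4 := by
  obtain ⟨f, rfl⟩ := h
  have diag : ∀ a : M, f ![a, a] = 0 := fun a =>
    f.map_eq_zero_of_eq _ (show (![a, a] : Fin 2 → M) 0 = ![a, a] 1 by simp) (by decide)
  have skew : ∀ a b : M, f ![b, a] = - f ![a, b] := by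
    intro a b
    have hc : (![a, b] ∘ Equiv.swap (0 : Fin 2) 1) = ![b, a] := by
      funext i; fin_cases i <;> simp [Equiv.swap_apply_left, Equiv.swap_apply_right]
    have := f.map_swap (v := ![a, b]) (show (0 : Fin 2) ≠ 1 by decide)
    rwa [hc] at this
  -- bundle both sides as bilinear maps
  set B2 : M →ₗ[ℝ] M →ₗ[ℝ] ℝ :=
    f ![E 0, E 1] • wBil (E.coord 0) (E.coord 1) + f ![E 0, E 2] • wBil (E.coord 0) (E.coord 2)
    + f ![E 0, E 3] • wBil (E.coord 0) (E.coord 3) + f ![E 0, E 4] • wBil (E.coord 0) (E.coord 4)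
    + f ![E 1, E 2] • wBil (E.coord 1) (E.coord 2) + f ![E 1, E 3] • wBil (E.coord 1) (E.coord 3)
    + f ![E 1, E 4] • wBil (E.coord 1) (E.coord 4) + f ![E 2, E 3] • wBil (E.coord 2) (E.coord 3)
    + f ![E 2, E 4] • wBil (E.coord 2) (E.coord 4) + f ![E 3, E 4] • wBil (E.coord 3) (E.coord 4)
    with hB2
  have hBB : altBil f = B2 := by
    apply Module.Basis.ext E; intro i
    apply Module.Basis.ext E; intro j
    have hij : altBil f (E i) (E j) = f ![E i, E j] := rfl
    rw [hij, hB2]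
    fin_cases i <;> fin_cases j <;>
      simp [wBil, LinearMap.mk₂_apply, Module.Basis.coord_apply, Module.Basis.repr_self,
        Finsupp.single_apply, diag] <;>
      rw [skew] <;> ring
  funext X
  have hx : (⇑f) X = altBil f (X 0) (X 1) := by
    conv_lhs => rw [finfun2_eq X]
    rfl
  rw [hx, hBB, hB2]
  simp [wBil, LinearMap.mk₂_apply, ww, w2, Module.Basis.coord_apply]
  try ring

end Decomp

section Ident
set_option linter.unusedSectionVars false
set_option maxHeartbeats 1000000
variable {M : Type*} [LieRing M] [LieAlgebra ℝ M] (E : Module.Basis (Fin 5) ℝ M)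
    (b01 : ⁅E 0, E 1⁆ = E 1) (b02 : ⁅E 0, E 2⁆ = -E 2)
    (b03 : ⁅E 0, E 3⁆ = (-2 : ℝ) • E 3) (b12 : ⁅E 1, E 2⁆ = -E 4)
    (b04 : ⁅E 0, E 4⁆ = 0) (b13 : ⁅E 1, E 3⁆ = 0) (b14 : ⁅E 1, E 4⁆ = 0)
    (b23 : ⁅E 2, E 3⁆ = 0) (b24 : ⁅E 2, E 4⁆ = 0) (b34 : ⁅E 3, E 4⁆ = 0)

/-- basis wedge 3-cochains -/
noncomputable def w3 (i j k : Fin 5) : Cochain M 3 := fun X =>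
  E.repr (X 0) i * (E.repr (X 1) j * E.repr (X 2) k - E.repr (X 2) j * E.repr (X 1) k)
  - E.repr (X 1) i * (E.repr (X 0) j * E.repr (X 2) k - E.repr (X 2) j * E.repr (X 0) k)
  + E.repr (X 2) i * (E.repr (X 0) j * E.repr (X 1) k - E.repr (X 1) j * E.repr (X 0) k)

include b01 b02 b03 b12 b04 b13 b14 b23 b24 b34 in
lemma rb (x y : M) (k : Fin 5) : E.repr ⁅x, y⁆ k =
    (E.repr x 0 * E.repr y 1 - E.repr x 1 * E.repr y 0) * (E.repr (E 1) k)
    + (E.repr x 2 * E.repr y 0 - E.repr x 0 * E.repr y 2) * (E.repr (E 2) k)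
    + (2*(E.repr x 3 * E.repr y 0) - 2*(E.repr x 0 * E.repr y 3)) * (E.repr (E 3) k)
    + (E.repr x 2 * E.repr y 1 - E.repr x 1 * E.repr y 2) * (E.repr (E 4) k) := by
  have b10 : ⁅E 1, E 0⁆ = -E 1 := by rw [← lie_skew, b01]
  have b20 : ⁅E 2, E 0⁆ = E 2 := by rw [← lie_skew, b02]; simp
  have b30 : ⁅E 3, E 0⁆ = (2:ℝ) • E 3 := by rw [← lie_skew, b03]; simp
  have b21 : ⁅E 2, E 1⁆ = E 4 := by rw [← lie_skew, b12]; simp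
  have b40 : ⁅E 4, E 0⁆ = 0 := by rw [← lie_skew, b04]; simp
  have b31 : ⁅E 3, E 1⁆ = 0 := by rw [← lie_skew, b13]; simp
  have b41 : ⁅E 4, E 1⁆ = 0 := by rw [← lie_skew, b14]; simp
  have b32 : ⁅E 3, E 2⁆ = 0 := by rw [← lie_skew, b23]; simp
  have b42 : ⁅E 4, E 2⁆ = 0 := by rw [← lie_skew, b24]; simp
  have b43 : ⁅E 4, E 3⁆ = 0 := by rw [← lie_skew, b34]; simp
  conv_lhs => rw [← Module.Basis.sum_repr E x, ← Module.Basis.sum_repr E y, Fin.sum_univ_five, Fin.sum_univ_five]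
  simp [Fin.sum_univ_five, lie_add, add_lie, lie_smul, smul_lie, lie_self,
    b01, b02, b03, b12, b04, b13, b14, b23, b24, b34,
    b10, b20, b30, b21, b40, b31, b41, b32, b42, b43, smul_smul, Finsupp.single_apply]
  split_ifs <;> ring

include b01 b02 b03 b12 b04 b13 b14 b23 b24 b34 in
lemma idA : dDefL M (-3) (fun v => E.repr v 0) 1 (c1 (fun v => E.repr v 1)) =
    (-4 : ℝ) • ww E 0 1 := by
  funext X
  rw [dDefL_apply_fun, CEd1_apply, oneWedge1_apply]
  simp only [c1, ww, w2, Pi.smul_apply, smul_eq_mul,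
    rb E b01 b02 b03 b12 b04 b13 b14 b23 b24 b34]
  simp [Module.Basis.repr_self, Finsupp.single_apply]
  ring

include b01 b02 b03 b12 b04 b13 b14 b23 b24 b34 in
lemma idB : dDefL M (-3) (fun v => E.repr v 0) 1 (c1 (fun v => E.repr v 2)) =
    (-2 : ℝ) • ww E 0 2 := by
  funext X
  rw [dDefL_apply_fun, CEd1_apply, oneWedge1_apply]
  simp only [c1, ww, w2, Pi.smul_apply, Pi.sub_apply, smul_eq_mul,
    rb E b01 b02 b03 b12 b04 b13 b14 b23 b24 b34]
  simp [Module.Basis.repr_self, Finsupp.single_apply]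
  ring

include b01 b02 b03 b12 b04 b13 b14 b23 b24 b34 in
lemma idC : dDefL M (-3) (fun v => E.repr v 0) 1 (c1 (fun v => E.repr v 3)) =
    (-1 : ℝ) • ww E 0 3 := by
  funext X
  rw [dDefL_apply_fun, CEd1_apply, oneWedge1_apply]
  simp only [c1, ww, w2, Pi.smul_apply, Pi.sub_apply, smul_eq_mul,
    rb E b01 b02 b03 b12 b04 b13 b14 b23 b24 b34]
  simp [Module.Basis.repr_self, Finsupp.single_apply]
  ring

include b01 b02 b03 b12 b04 b13 b14 b23 b24 b34 in
lemma idD : dDefL M (-3) (fun v => E.repr v 0) 1 (c1 (fun v => E.repr v 4)) =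
    ww E 1 2 - (3 : ℝ) • ww E 0 4 := by
  funext X
  rw [dDefL_apply_fun, CEd1_apply, oneWedge1_apply]
  simp only [c1, ww, w2, Pi.smul_apply, Pi.sub_apply, smul_eq_mul,
    rb E b01 b02 b03 b12 b04 b13 b14 b23 b24 b34]
  simp [Module.Basis.repr_self, Finsupp.single_apply]
  ring

include b01 b02 b03 b12 b04 b13 b14 b23 b24 b34 in
lemma j01 : dDefL M (-3) (fun v => E.repr v 0) 2 (ww E 0 1) = 0 := by
  funext X
  rw [dDefL_apply_fun, CEd2_apply, oneWedge2_apply]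
  simp only [ww, w2, w3, Pi.smul_apply, Pi.add_apply, Pi.zero_apply, smul_eq_mul,
    Matrix.cons_val_zero, Matrix.cons_val_one, Matrix.head_cons,
    rb E b01 b02 b03 b12 b04 b13 b14 b23 b24 b34]
  simp [Module.Basis.repr_self, Finsupp.single_apply]
  ring

include b01 b02 b03 b12 b04 b13 b14 b23 b24 b34 in
lemma j02 : dDefL M (-3) (fun v => E.repr v 0) 2 (ww E 0 2) = 0 := by
  funext X
  rw [dDefL_apply_fun, CEd2_apply, oneWedge2_apply]
  simp only [ww, w2, w3, Pi.smul_apply, Pi.add_apply, Pi.zero_apply, smul_eq_mul,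
    Matrix.cons_val_zero, Matrix.cons_val_one, Matrix.head_cons,
    rb E b01 b02 b03 b12 b04 b13 b14 b23 b24 b34]
  simp [Module.Basis.repr_self, Finsupp.single_apply]
  ring

include b01 b02 b03 b12 b04 b13 b14 b23 b24 b34 in
lemma j03 : dDefL M (-3) (fun v => E.repr v 0) 2 (ww E 0 3) = 0 := by
  funext X
  rw [dDefL_apply_fun, CEd2_apply, oneWedge2_apply]
  simp only [ww, w2, w3, Pi.smul_apply, Pi.add_apply, Pi.zero_apply, smul_eq_mul,
    Matrix.cons_val_zero, Matrix.cons_val_one, Matrix.head_cons,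
    rb E b01 b02 b03 b12 b04 b13 b14 b23 b24 b34]
  simp [Module.Basis.repr_self, Finsupp.single_apply]
  ring

include b01 b02 b03 b12 b04 b13 b14 b23 b24 b34 in
lemma j23 : dDefL M (-3) (fun v => E.repr v 0) 2 (ww E 2 3) = 0 := by
  funext X
  rw [dDefL_apply_fun, CEd2_apply, oneWedge2_apply]
  simp only [ww, w2, w3, Pi.smul_apply, Pi.add_apply, Pi.zero_apply, smul_eq_mul,
    Matrix.cons_val_zero, Matrix.cons_val_one, Matrix.head_cons,
    rb E b01 b02 b03 b12 b04 b13 b14 b23 b24 b34]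
  simp [Module.Basis.repr_self, Finsupp.single_apply]
  ring

include b01 b02 b03 b12 b04 b13 b14 b23 b24 b34 in
lemma j04 : dDefL M (-3) (fun v => E.repr v 0) 2 (ww E 0 4) = (-1 : ℝ) • w3 E 0 1 2 := by
  funext X
  rw [dDefL_apply_fun, CEd2_apply, oneWedge2_apply]
  simp only [ww, w2, w3, Pi.smul_apply, Pi.add_apply, Pi.zero_apply, smul_eq_mul,
    Matrix.cons_val_zero, Matrix.cons_val_one, Matrix.head_cons,
    rb E b01 b02 b03 b12 b04 b13 b14 b23 b24 b34]
  simp [Module.Basis.repr_self, Finsupp.single_apply]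
  ring

include b01 b02 b03 b12 b04 b13 b14 b23 b24 b34 in
lemma j12 : dDefL M (-3) (fun v => E.repr v 0) 2 (ww E 1 2) = (-3 : ℝ) • w3 E 0 1 2 := by
  funext X
  rw [dDefL_apply_fun, CEd2_apply, oneWedge2_apply]
  simp only [ww, w2, w3, Pi.smul_apply, Pi.add_apply, Pi.zero_apply, smul_eq_mul,
    Matrix.cons_val_zero, Matrix.cons_val_one, Matrix.head_cons,
    rb E b01 b02 b03 b12 b04 b13 b14 b23 b24 b34]
  simp [Module.Basis.repr_self, Finsupp.single_apply]
  ring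

include b01 b02 b03 b12 b04 b13 b14 b23 b24 b34 in
lemma j13 : dDefL M (-3) (fun v => E.repr v 0) 2 (ww E 1 3) = (-2 : ℝ) • w3 E 0 1 3 := by
  funext X
  rw [dDefL_apply_fun, CEd2_apply, oneWedge2_apply]
  simp only [ww, w2, w3, Pi.smul_apply, Pi.add_apply, Pi.zero_apply, smul_eq_mul,
    Matrix.cons_val_zero, Matrix.cons_val_one, Matrix.head_cons,
    rb E b01 b02 b03 b12 b04 b13 b14 b23 b24 b34]
  simp [Module.Basis.repr_self, Finsupp.single_apply]
  ring

include b01 b02 b03 b12 b04 b13 b14 b23 b24 b34 in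
lemma j14 : dDefL M (-3) (fun v => E.repr v 0) 2 (ww E 1 4) = (-4 : ℝ) • w3 E 0 1 4 := by
  funext X
  rw [dDefL_apply_fun, CEd2_apply, oneWedge2_apply]
  simp only [ww, w2, w3, Pi.smul_apply, Pi.add_apply, Pi.zero_apply, smul_eq_mul,
    Matrix.cons_val_zero, Matrix.cons_val_one, Matrix.head_cons,
    rb E b01 b02 b03 b12 b04 b13 b14 b23 b24 b34]
  simp [Module.Basis.repr_self, Finsupp.single_apply]
  ring

include b01 b02 b03 b12 b04 b13 b14 b23 b24 b34 in
lemma j24 : dDefL M (-3) (fun v => E.repr v 0) 2 (ww E 2 4) = (-2 : ℝ) • w3 E 0 2 4 := by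
  funext X
  rw [dDefL_apply_fun, CEd2_apply, oneWedge2_apply]
  simp only [ww, w2, w3, Pi.smul_apply, Pi.add_apply, Pi.zero_apply, smul_eq_mul,
    Matrix.cons_val_zero, Matrix.cons_val_one, Matrix.head_cons,
    rb E b01 b02 b03 b12 b04 b13 b14 b23 b24 b34]
  simp [Module.Basis.repr_self, Finsupp.single_apply]
  ring

include b01 b02 b03 b12 b04 b13 b14 b23 b24 b34 in
lemma j34 : dDefL M (-3) (fun v => E.repr v 0) 2 (ww E 3 4) = (-1 : ℝ) • w3 E 0 3 4 + (-1 : ℝ) • w3 E 1 2 3 := by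
  funext X
  rw [dDefL_apply_fun, CEd2_apply, oneWedge2_apply]
  simp only [ww, w2, w3, Pi.smul_apply, Pi.add_apply, Pi.zero_apply, smul_eq_mul,
    Matrix.cons_val_zero, Matrix.cons_val_one, Matrix.head_cons,
    rb E b01 b02 b03 b12 b04 b13 b14 b23 b24 b34]
  simp [Module.Basis.repr_self, Finsupp.single_apply]
  ring

end Ident

section Eval
set_option linter.unusedSectionVars false
variable {M : Type*} [LieRing M] [LieAlgebra ℝ M] (E : Module.Basis (Fin 5) ℝ M)
    (b23 : ⁅E 2, E 3⁆ = 0)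

include b23 in
lemma eval_d1_E23 (η : Cochain M 1) (hη : IsAltMap η) :
    dDefL M (-3) (fun v => E.repr v 0) 1 η ![E 2, E 3] = 0 := by
  obtain ⟨f, rfl⟩ := hη
  rw [dDefL_apply_fun, CEd1_apply, oneWedge1_apply]
  simp only [Matrix.cons_val_zero, Matrix.cons_val_one, Matrix.head_cons, b23]
  have h0 : f (fun _ : Fin 1 => (0 : M)) = 0 := f.map_coord_zero (i := 0) rfl
  simp [h0, Module.Basis.repr_self, Finsupp.single_apply]

end Eval

set_option maxHeartbeats 1600000 in
set_option synthInstance.maxHeartbeats 1000000 in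
/-- `H^2_{-3θ^1}(h)` is one-dimensional, spanned by the class of
`θ^3 ∧ θ^4`. -/

theorem H2_deformed_neg_three
    (H : Type*) [LieRing H] [LieAlgebra ℝ H] (E : Module.Basis (Fin 5) ℝ H)
    (b01 : ⁅E 0, E 1⁆ = E 1) (b02 : ⁅E 0, E 2⁆ = -E 2)
    (b03 : ⁅E 0, E 3⁆ = (-2 : ℝ) • E 3) (b12 : ⁅E 1, E 2⁆ = -E 4)
    (b04 : ⁅E 0, E 4⁆ = 0) (b13 : ⁅E 1, E 3⁆ = 0) (b14 : ⁅E 1, E 4⁆ = 0)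
    (b23 : ⁅E 2, E 3⁆ = 0) (b24 : ⁅E 2, E 4⁆ = 0) (b34 : ⁅E 3, E 4⁆ = 0) :
    Module.finrank ℝ (Hdef H (-3) (fun v => E.repr v 0) 1) = 1 ∧
    ∃ hm : w2 (fun v => E.repr v 2) (fun v => E.repr v 3) ∈
        Zdef H (-3) (fun v => E.repr v 0) 2,
      Submodule.span ℝ
        {(Submodule.Quotient.mk
            (⟨w2 (fun v => E.repr v 2) (fun v => E.repr v 3), hm⟩ :
              Zdef H (-3) (fun v => E.repr v 0) 2) :
          Hdef H (-3) (fun v => E.repr v 0) 1)} = ⊤ := by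
  have hww23 : w2 (fun v : H => E.repr v 2) (fun v : H => E.repr v 3) = ww E 2 3 := rfl
  -- the central cocycle is in Zdef
  have hmZ : w2 (fun v : H => E.repr v 2) (fun v : H => E.repr v 3) ∈
      Zdef H (-3) (fun v => E.repr v 0) 2 := by
    rw [hww23, Zdef, Submodule.mem_inf]
    exact ⟨ww_mem E 2 3, LinearMap.mem_ker.mpr
      (j23 E b01 b02 b03 b12 b04 b13 b14 b23 b24 b34)⟩
  -- coboundary membership facts
  have hB1 : ww E 0 1 ∈ Bdef H (-3) (fun v => E.repr v 0) 1 := by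
    refine Submodule.mem_map.mpr ⟨(-4 : ℝ)⁻¹ • c1 (fun v => E.repr v 1), ?_, ?_⟩
    · exact Submodule.smul_mem _ _ (by rw [coord_eq E 1]; exact isAlt_c1 _)
    · rw [map_smul, idA E b01 b02 b03 b12 b04 b13 b14 b23 b24 b34, smul_smul]
      norm_num
  have hB2 : ww E 0 2 ∈ Bdef H (-3) (fun v => E.repr v 0) 1 := by
    refine Submodule.mem_map.mpr ⟨(-2 : ℝ)⁻¹ • c1 (fun v => E.repr v 2), ?_, ?_⟩
    · exact Submodule.smul_mem _ _ (by rw [coord_eq E 2]; exact isAlt_c1 _)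
    · rw [map_smul, idB E b01 b02 b03 b12 b04 b13 b14 b23 b24 b34, smul_smul]
      norm_num
  have hB3 : ww E 0 3 ∈ Bdef H (-3) (fun v => E.repr v 0) 1 := by
    refine Submodule.mem_map.mpr ⟨(-1 : ℝ)⁻¹ • c1 (fun v => E.repr v 3), ?_, ?_⟩
    · exact Submodule.smul_mem _ _ (by rw [coord_eq E 3]; exact isAlt_c1 _)
    · rw [map_smul, idC E b01 b02 b03 b12 b04 b13 b14 b23 b24 b34, smul_smul]
      norm_num
  have hB4 : ww E 1 2 - (3 : ℝ) • ww E 0 4 ∈ Bdef H (-3) (fun v => E.repr v 0) 1 := by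
    refine Submodule.mem_map.mpr ⟨c1 (fun v => E.repr v 4), ?_, ?_⟩
    · rw [coord_eq E 4]; exact isAlt_c1 _
    · exact idD E b01 b02 b03 b12 b04 b13 b14 b23 b24 b34
  -- every cocycle is a multiple of ww23 modulo coboundaries
  have hspan : ∀ z : Zdef H (-3) (fun v => E.repr v 0) 2, ∃ c : ℝ,
      (z : Cochain H 2) - c • ww E 2 3 ∈ Bdef H (-3) (fun v => E.repr v 0) 1 := by
    intro z
    obtain ⟨halt, hker⟩ := Submodule.mem_inf.mp z.2
    have hker' : dDefL H (-3) (fun v => E.repr v 0) 2 (z : Cochain H 2) = 0 :=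
      LinearMap.mem_ker.mp hker
    have hdec := alt2_decomp E (z : Cochain H 2) halt
    rw [hdec] at hker'
    simp only [map_add, map_smul,
      j01 E b01 b02 b03 b12 b04 b13 b14 b23 b24 b34,
      j02 E b01 b02 b03 b12 b04 b13 b14 b23 b24 b34,
      j03 E b01 b02 b03 b12 b04 b13 b14 b23 b24 b34,
      j23 E b01 b02 b03 b12 b04 b13 b14 b23 b24 b34,
      j04 E b01 b02 b03 b12 b04 b13 b14 b23 b24 b34,
      j12 E b01 b02 b03 b12 b04 b13 b14 b23 b24 b34,
      j13 E b01 b02 b03 b12 b04 b13 b14 b23 b24 b34,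
      j14 E b01 b02 b03 b12 b04 b13 b14 b23 b24 b34,
      j24 E b01 b02 b03 b12 b04 b13 b14 b23 b24 b34,
      j34 E b01 b02 b03 b12 b04 b13 b14 b23 b24 b34,
      smul_zero, zero_add, add_zero] at hker'
    have h1 := congrFun hker' ![E 0, E 1, E 2]
    have h2 := congrFun hker' ![E 0, E 1, E 3]
    have h3 := congrFun hker' ![E 0, E 1, E 4]
    have h4 := congrFun hker' ![E 0, E 2, E 4]
    have h5 := congrFun hker' ![E 0, E 3, E 4]
    simp [w3, Module.Basis.repr_self, Finsupp.single_apply] at h1 h2 h3 h4 h5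
    set c01 := (z : Cochain H 2) ![E 0, E 1] with hc01
    set c02 := (z : Cochain H 2) ![E 0, E 2] with hc02
    set c03 := (z : Cochain H 2) ![E 0, E 3] with hc03
    set c04 := (z : Cochain H 2) ![E 0, E 4] with hc04
    set c12 := (z : Cochain H 2) ![E 1, E 2] with hc12
    set c13 := (z : Cochain H 2) ![E 1, E 3] with hc13
    set c14 := (z : Cochain H 2) ![E 1, E 4] with hc14
    set c23 := (z : Cochain H 2) ![E 2, E 3] with hc23
    set c24 := (z : Cochain H 2) ![E 2, E 4] with hc24
    set c34 := (z : Cochain H 2) ![E 3, E 4] with hc34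
    have e1 : c04 = -3 * c12 := by linarith
    have e2 : c13 = 0 := by linarith
    have e3 : c14 = 0 := by linarith
    have e4 : c24 = 0 := by linarith
    have e5 : c34 = 0 := by linarith
    refine ⟨c23, ?_⟩
    have hfin : (z : Cochain H 2) - c23 • ww E 2 3 =
        c01 • ww E 0 1 + c02 • ww E 0 2 + c03 • ww E 0 3
          + c12 • (ww E 1 2 - (3 : ℝ) • ww E 0 4) := by
      rw [hdec, e1, e2, e3, e4, e5]
      module
    rw [hfin]
    exact Submodule.add_mem _ (Submodule.add_mem _ (Submodule.add_mem _
      (Submodule.smul_mem _ _ hB1) (Submodule.smul_mem _ _ hB2))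
      (Submodule.smul_mem _ _ hB3)) (Submodule.smul_mem _ _ hB4)
  -- the generator and its class
  set v : Zdef H (-3) (fun v => E.repr v 0) 2 :=
    ⟨w2 (fun v => E.repr v 2) (fun v => E.repr v 3), hmZ⟩ with hv
  set mkv : Hdef H (-3) (fun v => E.repr v 0) 1 := Submodule.Quotient.mk v with hmkv
  have hsp : Submodule.span ℝ {mkv} = ⊤ := by
    rw [Submodule.eq_top_iff']
    intro q
    obtain ⟨z, rfl⟩ := Submodule.Quotient.mk_surjective _ q
    obtain ⟨c, hc⟩ := hspan z
    have hz0 : Submodule.Quotient.mk (p := Submodule.comap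
        (Zdef H (-3) (fun v => E.repr v 0) 2).subtype
        (Bdef H (-3) (fun v => E.repr v 0) 1)) (z - c • v) = 0 := by
      rw [Submodule.Quotient.mk_eq_zero]
      refine Submodule.mem_comap.mpr ?_
      simpa [hv, hww23] using hc
    have : (Submodule.Quotient.mk z : Hdef H (-3) (fun v => E.repr v 0) 1) = c • mkv := by
      have := congrArg (· + c • mkv) hz0
      simpa [Submodule.Quotient.mk_sub, Submodule.Quotient.mk_smul, sub_add_cancel, hmkv]
        using this
    rw [this]
    exact Submodule.smul_mem _ _ (Submodule.mem_span_singleton_self mkv)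
  have hne : mkv ≠ 0 := by
    intro h
    rw [hmkv, Submodule.Quotient.mk_eq_zero] at h
    have hmem : ww E 2 3 ∈ Bdef H (-3) (fun v => E.repr v 0) 1 := by
      simpa [hv, hww23] using Submodule.mem_comap.mp h
    obtain ⟨η, hη, hdη⟩ := Submodule.mem_map.mp hmem
    have hval := congrFun hdη ![E 2, E 3]
    rw [eval_d1_E23 E b23 η hη] at hval
    simp [ww, w2, Module.Basis.repr_self, Finsupp.single_apply] at hval
  refine ⟨?_, hmZ, hsp⟩
  exact finrank_eq_one mkv hne
    (fun w => Submodule.mem_span_singleton.mp (hsp ▸ Submodule.mem_top))
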